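/- A mixed graph G whose skeleton is a tree is an MEC if and only if (1) G has no induced subgraph of the form a→b—c, and (2) for every directed edge u→v of G there exists a node w such that u→v is part of an induced subgraph of G of the form w→u→v or of the form u→v←w. -/

import Mathlib

/-! Common definitions: mixed graphs, Markov equivalence classes (MECs),
partial MECs, projections, extensions, and counting classes. -/

/-- A mixed graph on a vertex type `V`: an irreflexive edge relation. -/
structure MixedGraph (V : Type*) where
  E : V → V → Prop
  irrefl : ∀ v, ¬ E v v

namespace MixedGraph

variable {V : Type*}

/-- `u — v` : undirected edge of `M`. -/
def undirE (M : MixedGraph V) (u v : V) : Prop := M.E u v ∧ M.E v u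

/-- `u → v` : directed edge of `M`. -/
def dirE (M : MixedGraph V) (u v : V) : Prop := M.E u v ∧ ¬ M.E v u

/-- `u` and `v` are adjacent in `M` (joined by some edge). -/
def adjE (M : MixedGraph V) (u v : V) : Prop := M.E u v ∨ M.E v u

/-- The skeleton of a mixed graph: replace every directed edge by an undirected one. -/
def skeleton (M : MixedGraph V) : SimpleGraph V where
  Adj u v := M.adjE u v
  symm := by
    refine ⟨?_⟩
    intro u v h
    exact Or.symm h
  loopless := by
    refine ⟨?_⟩
    intro v h
    rcases h with h | h <;> exact M.irrefl v h

/-- The undirected part of a mixed graph, as a simple graph. -/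
def undirGraph (M : MixedGraph V) : SimpleGraph V where
  Adj u v := M.undirE u v
  symm := by
    refine ⟨?_⟩
    intro u v h
    exact ⟨h.2, h.1⟩
  loopless := by
    refine ⟨?_⟩
    intro v h
    exact M.irrefl v h.1

/-- `M` is a chain graph: no directed cycle, i.e. no cycle
`u_1, …, u_l, u_1` (`l ≥ 2`, vertices distinct) in which every consecutive pair is joined
by an undirected or forward-directed edge and at least one edge is directed. -/
def IsChainGraph (M : MixedGraph V) : Prop :=
  ∀ (l : ℕ) (f : ZMod l → V), 2 ≤ l → Function.Injective f →
    (∀ i, M.E (f i) (f (i + 1))) → ∀ i, ¬ M.dirE (f i) (f (i + 1))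

/-- `a → b ← c` is a v-structure of `M` (in particular `a`, `c` non-adjacent). -/
def vstruct (M : MixedGraph V) (a b c : V) : Prop :=
  M.dirE a b ∧ M.dirE c b ∧ ¬ M.adjE a c

/-- The set of v-structures of `M`, as ordered triples `(a, b, c)` with `a → b ← c`. -/
def vstructs (M : MixedGraph V) : Set (V × V × V) :=
  {t | M.vstruct t.1 t.2.1 t.2.2}

/-- The directed edge `u → v` is strongly protected in `M`: it occurs in an induced
subgraph of one of the four forms (a) `w→u→v` (`w`,`v` non-adjacent);
(b) `u→v←w` (`u`,`w` non-adjacent); (c) `u→w`, `w→v`, `u→v`;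
(d) `w→v`, `w'→v`, `w—u`, `w'—u`, `u→v` (`w`,`w'` non-adjacent). -/
def StronglyProtected (M : MixedGraph V) (u v : V) : Prop :=
  (∃ w, M.dirE w u ∧ ¬ M.adjE w v) ∨
  (∃ w, M.dirE w v ∧ ¬ M.adjE u w) ∨
  (∃ w, M.dirE u w ∧ M.dirE w v) ∨
  (∃ w w', w ≠ w' ∧ M.undirE w u ∧ M.undirE w' u ∧ M.dirE w v ∧ M.dirE w' v ∧
    ¬ M.adjE w w')

/-- The induced mixed subgraph of `M` on the vertex set `X`, kept on the same vertex
type (vertices outside `X` become isolated). -/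
def induce (M : MixedGraph V) (X : Set V) : MixedGraph V where
  E u v := u ∈ X ∧ v ∈ X ∧ M.E u v
  irrefl := by
    intro v h
    exact M.irrefl v h.2.2

end MixedGraph

namespace SimpleGraph

variable {V : Type*}

/-- A simple graph is chordal: every cycle of length at least `4` has a chord
(an edge between two non-consecutive vertices of the cycle). -/
def IsChordalGraph (G : SimpleGraph V) : Prop :=
  ∀ (l : ℕ) (f : ZMod l → V), 4 ≤ l → Function.Injective f →
    (∀ i, G.Adj (f i) (f (i + 1))) →
    ∃ i j : ZMod l, j ≠ i + 1 ∧ i ≠ j + 1 ∧ G.Adj (f i) (f j)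

/-- The induced subgraph of `G` on the vertex set `X`, kept on the same vertex type
(vertices outside `X` become isolated). -/
def inducedOn (G : SimpleGraph V) (X : Set V) : SimpleGraph V where
  Adj u v := u ∈ X ∧ v ∈ X ∧ G.Adj u v
  symm := by
    refine ⟨?_⟩
    intro u v h
    exact ⟨h.2.1, h.1, h.2.2.symm⟩
  loopless := by
    refine ⟨?_⟩
    intro v h
    exact G.loopless.irrefl v h.2.2

/-- The set of neighbours in `G` of vertices of `S`. -/
def nbhdSet (G : SimpleGraph V) (S : Set V) : Set V :=
  {v | ∃ u ∈ S, G.Adj u v}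

/-- View an undirected graph as a mixed graph all of whose edges are undirected. -/
def toMixed (G : SimpleGraph V) : MixedGraph V :=
  ⟨G.Adj, fun v h => G.loopless.irrefl v h⟩

end SimpleGraph

namespace MixedGraph

variable {V : Type*}

/-- `M` is (the graphical representation of) a Markov equivalence class, by the
Andersson–Madigan–Perlman characterization: (1) `M` is a chain graph; (2) every
undirected connected component of `M` is chordal; (3) `M` has no induced subgraph
`a→b—c`; (4) every directed edge of `M` is strongly protected. -/
def IsMEC (M : MixedGraph V) : Prop :=
  M.IsChainGraph ∧
  M.undirGraph.IsChordalGraph ∧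
  (∀ a b c, M.dirE a b → M.undirE b c → M.adjE a c) ∧
  (∀ u v, M.dirE u v → M.StronglyProtected u v)

/-- `M` is a partial MEC: conditions (1)–(3) of the MEC characterization. -/
def IsPartialMEC (M : MixedGraph V) : Prop :=
  M.IsChainGraph ∧
  M.undirGraph.IsChordalGraph ∧
  (∀ a b c, M.dirE a b → M.undirE b c → M.adjE a c)

end MixedGraph

/-- `MEC(G)` : the set of MECs with skeleton `G`. -/
def MECset {V : Type*} (G : SimpleGraph V) : Set (MixedGraph V) :=
  {M | M.IsMEC ∧ M.skeleton = G}

/-- `PMEC(G)` : the set of partial MECs with skeleton `G`. -/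
def PMECset {V : Type*} (G : SimpleGraph V) : Set (MixedGraph V) :=
  {M | M.IsPartialMEC ∧ M.skeleton = G}

/-- `M' = P(M, Y)` : `M'` is the projection of `M` on the vertex set `Y`, i.e. the
(unique) MEC of the induced subgraph on `Y` whose set of v-structures equals that
of `M[Y]`. -/
def IsProjection {V : Type*} (M : MixedGraph V) (Y : Set V) (M' : MixedGraph V) : Prop :=
  M' ∈ MECset (M.skeleton.inducedOn Y) ∧ M'.vstructs = (M.induce Y).vstructs

/-- `MEC(G, r, 1)` : MECs of `G` that contain a directed edge into `r`. -/
def MEC1 {V : Type*} (G : SimpleGraph V) (r : V) : Set (MixedGraph V) :=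
  {M ∈ MECset G | ∃ x, M.dirE x r}

/-- `MEC(G, r, 0, i)` : MECs of `G` with no directed edge into `r` and exactly `i`
undirected edges incident to `r`. -/
def MEC0 {V : Type*} (G : SimpleGraph V) (r : V) (i : ℕ) : Set (MixedGraph V) :=
  {M ∈ MECset G | (¬ ∃ x, M.dirE x r) ∧ {x | M.undirE r x}.ncard = i}

/-- The degree of `r` in `G`. -/
noncomputable def degS {V : Type*} (G : SimpleGraph V) (r : V) : ℕ :=
  {x | G.Adj r x}.ncard

/-- `n_1(G, r) = |MEC(G, r, 1)|`. -/
noncomputable def n1count {V : Type*} (G : SimpleGraph V) (r : V) : ℕ :=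
  (MEC1 G r).ncard

/-- `n_0^i(G, r) = |MEC(G, r, 0, i)|`. -/
noncomputable def n0count {V : Type*} (G : SimpleGraph V) (r : V) (i : ℕ) : ℕ :=
  (MEC0 G r i).ncard

/-- `n_0(G, r) = Σ_{i = 0}^{δ} n_0^i(G, r)`, where `δ` is the degree of `r` in `G`. -/
noncomputable def n0total {V : Type*} (G : SimpleGraph V) (r : V) : ℕ :=
  ∑ i ∈ Finset.range (degS G r + 1), n0count G r i

/-- The set of vertices lying on the `r1` side after cutting the edge `r1 — r2` of `G`
(i.e. the vertices reachable from `r1` in `G` with the edge `r1 — r2` deleted). -/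
def cutSide {V : Type*} (G : SimpleGraph V) (r1 r2 : V) : Set V :=
  {v | (G.deleteEdges {s(r1, r2)}).Reachable r1 v}

/-- `MEC(G, O)` : the MECs of `G` whose induced subgraph on `X` (the vertex set of
`O`) equals `O`. -/
def MECwith {V : Type*} (G : SimpleGraph V) (O : MixedGraph V) (X : Set V) :
    Set (MixedGraph V) :=
  {M ∈ MECset G | M.induce X = O}

/-- `O ∈ E(O1, O2)` : `O` is an extension of `(O1, O2)` (where `X1`, `X2` are the
vertex sets of `O1`, `O2`): for each `a ∈ {1,2}`, (i) every directed edge of `O_a` is a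
directed edge of `O`; (ii) `V(O_a) = V(O[V_{O_a}])`; (iii) every undirected edge of
`O_a` that is directed in `O` is strongly protected in `O`. -/
def IsExtension {V : Type*} (O O1 O2 : MixedGraph V) (X1 X2 : Set V) : Prop :=
  (∀ u v, O1.dirE u v → O.dirE u v) ∧
  (∀ u v, O2.dirE u v → O.dirE u v) ∧
  O1.vstructs = (O.induce X1).vstructs ∧
  O2.vstructs = (O.induce X2).vstructs ∧
  (∀ u v, O1.undirE u v → O.dirE u v → O.StronglyProtected u v) ∧
  (∀ u v, O2.undirE u v → O.dirE u v → O.StronglyProtected u v)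

/-- The v-structure (recorded as the ordered triple `t = (a, b, c)` with `a → b ← c`)
contains the directed edge `x → y`. -/
def vstructContains {V : Type*} (t : V × V × V) (x y : V) : Prop :=
  (t.1 = x ∧ t.2.1 = y) ∨ (t.2.2 = x ∧ t.2.1 = y)



open SimpleGraph

/-- Walk along `f 0, f 1, …, f j`. -/
def walkAux {V : Type*} {G : SimpleGraph V} {l : ℕ} (f : ZMod l → V)
    (hadj : ∀ i, G.Adj (f i) (f (i + 1))) : (j : ℕ) → G.Walk (f 0) (f (j : ZMod l))
  | 0 => Walk.nil.copy rfl (by norm_num)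
  | j + 1 => (walkAux f hadj j).concat (by
      have h := hadj (j : ZMod l)
      have : ((j : ZMod l) + 1) = ((j + 1 : ℕ) : ZMod l) := by push_cast; ring
      rwa [this] at h)

lemma walkAux_length {V : Type*} {G : SimpleGraph V} {l : ℕ} (f : ZMod l → V)
    (hadj : ∀ i, G.Adj (f i) (f (i + 1))) (j : ℕ) :
    (walkAux f hadj j).length = j := by
  induction j with
  | zero => simp [walkAux]
  | succ j ih => simp [walkAux, Walk.length_concat, ih]

lemma walkAux_support {V : Type*} {G : SimpleGraph V} {l : ℕ} (f : ZMod l → V)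
    (hadj : ∀ i, G.Adj (f i) (f (i + 1))) (j : ℕ) :
    (walkAux f hadj j).support = (List.range (j + 1)).map (fun k : ℕ => f (k : ZMod l)) := by
  induction j with
  | zero => simp [walkAux, List.range_succ]
  | succ j ih =>
      rw [List.range_succ (n := j + 1), List.map_append]
      simp only [walkAux, Walk.support_concat, ih, List.concat_eq_append]
      simp

/-- An acyclic graph has no injectively-embedded cycle of length `≥ 3`. -/
lemma acyclic_no_cycleFun {V : Type*} {G : SimpleGraph V} (hG : G.IsAcyclic)
    (l : ℕ) (f : ZMod l → V) (hl : 3 ≤ l) (hinj : Function.Injective f)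
    (hadj : ∀ i, G.Adj (f i) (f (i + 1))) : False := by
  haveI : NeZero l := ⟨by omega⟩
  have hcast : ∀ k₁ k₂ : ℕ, k₁ < l → k₂ < l → (k₁ : ZMod l) = (k₂ : ZMod l) → k₁ = k₂ := by
    intro k₁ k₂ h₁ h₂ h
    have := congrArg ZMod.val h
    rwa [ZMod.val_natCast_of_lt h₁, ZMod.val_natCast_of_lt h₂] at this
  have hnodup : (walkAux f hadj (l - 1)).support.Nodup := by
    rw [walkAux_support]
    refine List.Nodup.map_on ?_ List.nodup_range
    intro x hx y hy hxy
    rw [List.mem_range] at hx hy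
    exact hcast x y (by omega) (by omega) (hinj hxy)
  have hedge : G.Adj (f 0) (f ((l - 1 : ℕ) : ZMod l)) := by
    have h := hadj ((l - 1 : ℕ) : ZMod l)
    have : ((l - 1 : ℕ) : ZMod l) + 1 = 0 := by
      have : ((l - 1 : ℕ) : ZMod l) + 1 = ((l - 1 + 1 : ℕ) : ZMod l) := by push_cast; ring
      rw [this, Nat.sub_add_cancel (by omega), ZMod.natCast_self]
    rw [this] at h
    exact h.symm
  have hp : (walkAux f hadj (l - 1)).IsPath := by
    rw [Walk.isPath_def]; exact hnodup
  have := hG.path_unique ⟨walkAux f hadj (l - 1), hp⟩ (Path.singleton hedge)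
  have hlen := congrArg (fun p : G.Path (f 0) (f ((l - 1 : ℕ) : ZMod l)) => p.1.length) this
  simp [walkAux_length, Path.singleton] at hlen
  omega

lemma skelAdj {V : Type*} (M : MixedGraph V) {u v : V} (h : M.E u v) :
    M.skeleton.Adj u v := Or.inl h

lemma skelAdj' {V : Type*} (M : MixedGraph V) {u v : V} (h : M.E v u) :
    M.skeleton.Adj u v := Or.inr h

theorem tree_MEC_characterization {V : Type*} [Fintype V] [DecidableEq V]
    (M : MixedGraph V) (hT : M.skeleton.IsTree) :
    M.IsMEC ↔
      ((∀ a b c, M.dirE a b → M.undirE b c → M.adjE a c) ∧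
        ∀ u v, M.dirE u v → ∃ w,
          (M.dirE w u ∧ ¬ M.adjE w v) ∨ (M.dirE w v ∧ ¬ M.adjE u w)) := by
  have hacyc := hT.IsAcyclic
  constructor
  · rintro ⟨hchain, hchord, h3, hprot⟩
    refine ⟨h3, fun u v huv => ?_⟩
    rcases hprot u v huv with ⟨w, hwu, hnadj⟩ | ⟨w, hwv, hnadj⟩ | ⟨w, huw, hwv⟩ |
      ⟨w, w', hne, hwu, hw'u, hwv, hw'v, hnadj⟩
    · exact ⟨w, Or.inl ⟨hwu, hnadj⟩⟩
    · exact ⟨w, Or.inr ⟨hwv, hnadj⟩⟩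
    · -- case (c): triangle `u, w, v` in the tree skeleton, impossible
      exfalso
      have huw' : u ≠ w := fun h => M.irrefl u (h ▸ huw.1)
      have hwv' : w ≠ v := fun h => M.irrefl w (h ▸ hwv.1)
      have huv' : u ≠ v := fun h => M.irrefl u (h ▸ huv.1)
      have a1 : M.skeleton.Adj u v := skelAdj M huv.1
      have a2 : M.skeleton.Adj u w := skelAdj M huw.1
      have a3 : M.skeleton.Adj w v := skelAdj M hwv.1
      have hp2 : (SimpleGraph.Walk.cons a2 ((SimpleGraph.Walk.cons a3
          SimpleGraph.Walk.nil))).IsPath := by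
        rw [SimpleGraph.Walk.isPath_def]
        simp [huw', hwv', huv']
      have heq := hacyc.path_unique (SimpleGraph.Path.singleton a1)
        ⟨SimpleGraph.Walk.cons a2 (SimpleGraph.Walk.cons a3 SimpleGraph.Walk.nil), hp2⟩
      have hlen := congrArg (fun p : M.skeleton.Path u v => p.1.length) heq
      simp [SimpleGraph.Path.singleton] at hlen
    · -- case (d): 4-cycle `w, u, w', v` in the tree skeleton, impossible
      exfalso
      have hwu' : w ≠ u := fun h => M.irrefl w (h ▸ hwu.1)
      have huw'' : u ≠ w' := fun h => M.irrefl u (h ▸ hw'u.2)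
      have hwv' : w ≠ v := fun h => M.irrefl w (h ▸ hwv.1)
      have hvw' : v ≠ w' := fun h => M.irrefl v (h.symm ▸ hw'v.1)
      have huv' : u ≠ v := fun h => M.irrefl u (h ▸ huv.1)
      have a1 : M.skeleton.Adj w u := skelAdj M hwu.1
      have a2 : M.skeleton.Adj u w' := skelAdj M hw'u.2
      have a3 : M.skeleton.Adj w v := skelAdj M hwv.1
      have a4 : M.skeleton.Adj v w' := skelAdj' M hw'v.1
      have hp1 : (SimpleGraph.Walk.cons a1 (SimpleGraph.Walk.cons a2
          SimpleGraph.Walk.nil)).IsPath := by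
        rw [SimpleGraph.Walk.isPath_def]
        simp [hwu', huw'', hne]
      have hp2 : (SimpleGraph.Walk.cons a3 (SimpleGraph.Walk.cons a4
          SimpleGraph.Walk.nil)).IsPath := by
        rw [SimpleGraph.Walk.isPath_def]
        simp [hwv', hvw', hne]
      have heq := hacyc.path_unique
        (⟨SimpleGraph.Walk.cons a1 (SimpleGraph.Walk.cons a2 SimpleGraph.Walk.nil), hp1⟩ :
          M.skeleton.Path w w')
        ⟨SimpleGraph.Walk.cons a3 (SimpleGraph.Walk.cons a4 SimpleGraph.Walk.nil), hp2⟩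
      have hsupp := congrArg (fun p : M.skeleton.Path w w' => p.1.support) heq
      simp at hsupp
      exact huv' hsupp
  · rintro ⟨h3, hprot⟩
    refine ⟨?_, ?_, h3, fun u v huv => ?_⟩
    · -- chain graph
      intro l f hl hinj hE i hdir
      rcases eq_or_lt_of_le hl with h2 | h3l
      · subst h2
        have h := hE (i + 1)
        have hi : ∀ j : ZMod 2, j + 1 + 1 = j := by decide
        rw [hi i] at h
        exact hdir.2 h
      · exact acyclic_no_cycleFun hacyc l f (by omega) hinj
          (fun j => skelAdj M (hE j))
    · -- chordality (vacuous: the skeleton is acyclic)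
      intro l f hl hinj hadj
      exact (acyclic_no_cycleFun hacyc l f (by omega) hinj
        (fun j => skelAdj M (hadj j).1)).elim
    · rcases hprot u v huv with ⟨w, h | h⟩
      · exact Or.inl ⟨w, h⟩
      · exact Or.inr (Or.inl ⟨w, h⟩)
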